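/- For the blow-up graph with fasteners G_{σ,τ,a} = (V,E): for any positive integer I ≤ στ and any partition of V into I+1 communities such that v₁ and v₂ lie in the same community, the number |E^≠| of edges of E joining vertices of distinct communities satisfies |E^≠| ≥ I(τ + a). -/

import Mathlib

open Finset

set_option maxHeartbeats 1000000 in

lemma claimCstar (τ : ℕ) (hτ : 1 ≤ τ) (a : ℚ) (ha0 : 0 < a) (ha1 : a ≤ 1)
    (N : ℕ) (C φ : ℕ → ℕ) (ρ : ℕ → ℚ)
    (hρ0 : ∀ j, j ≤ N → 0 ≤ ρ j) (hρ1 : ∀ j, j ≤ N → ρ j < 1)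
    (hφ : ∀ j, j < N → (φ j : ℚ) = a * τ + ρ j - ρ (j+1))
    (hC : ∀ j, j ≤ N → C j ≤ τ) (hCN : C N = C 0) (hC0 : C 0 < τ) :
    ∑ j ∈ Finset.range N, (min (C j) (φ j) : ℚ) ≤
      a * ∑ j ∈ Finset.range N, (C j : ℚ)
      + ∑ j ∈ Finset.range N, (C j : ℚ) * ((τ : ℚ) - C (j+1)) := by
  have hτQ : (1:ℚ) ≤ (τ:ℚ) := by exact_mod_cast hτ
  set G : ℕ → ℚ := fun k => ∑ j ∈ Finset.range k,
    ((min (C j) (φ j) : ℚ) - a * C j - (C j : ℚ) * ((τ:ℚ) - C (j+1))) with hG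
  have key : ∀ k, k ≤ N → G k ≤ (if C k = τ then (1-a)*((τ:ℚ)-1) + 1 - ρ k else 0) := by
    intro k
    induction k with
    | zero =>
      intro _
      rw [if_neg (by omega : ¬ C 0 = τ)]
      simp [hG]
    | succ k ih =>
      intro h
      have hkN : k < N := h
      have ihk := ih (le_of_lt hkN)
      have hexp : G (k+1) = G k +
          ((min (C k) (φ k) : ℚ) - a * C k - (C k : ℚ) * ((τ:ℚ) - C (k+1))) :=
        Finset.sum_range_succ _ k
      have hmc : (min (C k) (φ k) : ℚ) ≤ (C k : ℚ) := by
        exact_mod_cast Nat.cast_le.2 (min_le_left (C k) (φ k))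
      have hmφ : (min (C k) (φ k) : ℚ) ≤ (φ k : ℚ) := by
        exact_mod_cast Nat.cast_le.2 (min_le_right (C k) (φ k))
      have hφk := hφ k hkN
      have hCk := hC k (le_of_lt hkN)
      have hCk1 := hC (k+1) h
      have hCkQ : (C k : ℚ) ≤ (τ:ℚ) := by exact_mod_cast hCk
      have hCk1Q : (C (k+1) : ℚ) ≤ (τ:ℚ) := by exact_mod_cast hCk1
      have hck0 : (0:ℚ) ≤ (C k : ℚ) := by positivity
      have hp0 := hρ0 k (le_of_lt hkN)
      have hp1 := hρ1 k (le_of_lt hkN)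
      have hq0 := hρ0 (k+1) h
      have hq1 := hρ1 (k+1) h
      by_cases h1 : C (k+1) = τ
      · rw [if_pos h1]
        by_cases h2 : C k = τ
        · rw [if_pos h2] at ihk
          have : (C k : ℚ) = (τ:ℚ) := by exact_mod_cast congrArg (Nat.cast (R := ℚ)) h2
          have h1' : (C (k+1) : ℚ) = (τ:ℚ) := by exact_mod_cast congrArg (Nat.cast (R := ℚ)) h1
          rw [hexp]
          nlinarith [this, h1']
        · rw [if_neg h2] at ihk
          have hCklt : C k < τ := lt_of_le_of_ne hCk h2
          have hCkle : (C k : ℚ) ≤ (τ:ℚ) - 1 := by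
            have : C k + 1 ≤ τ := hCklt
            have := (Nat.cast_le (α := ℚ)).2 this
            push_cast at this; linarith
          have h1' : (C (k+1) : ℚ) = (τ:ℚ) := by exact_mod_cast congrArg (Nat.cast (R := ℚ)) h1
          rw [hexp]
          have hfac : (0:ℚ) ≤ (1-a) := by linarith
          nlinarith [mul_le_mul_of_nonneg_left hCkle hfac]
      · rw [if_neg h1]
        have hCk1lt : C (k+1) < τ := lt_of_le_of_ne hCk1 h1
        have hd1 : (1:ℚ) ≤ (τ:ℚ) - (C (k+1) : ℚ) := by
          have : C (k+1) + 1 ≤ τ := hCk1lt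
          have := (Nat.cast_le (α := ℚ)).2 this
          push_cast at this; linarith
        by_cases h2 : C k = τ
        · rw [if_pos h2] at ihk
          have hck : (C k : ℚ) = (τ:ℚ) := by exact_mod_cast congrArg (Nat.cast (R := ℚ)) h2
          have hTd : (τ:ℚ) * 1 ≤ (τ:ℚ) * ((τ:ℚ) - C (k+1)) :=
            mul_le_mul_of_nonneg_left hd1 (by linarith)
          have haT : 0 ≤ a * ((τ:ℚ) - 1) := mul_nonneg (le_of_lt ha0) (by linarith)
          rw [hexp]
          nlinarith
        · rw [if_neg h2] at ihk
          have hckd : (C k : ℚ) * 1 ≤ (C k : ℚ) * ((τ:ℚ) - C (k+1)) :=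
            mul_le_mul_of_nonneg_left hd1 hck0
          have : 0 ≤ a * (C k : ℚ) := mul_nonneg (le_of_lt ha0) hck0
          rw [hexp]
          nlinarith
  have hfin := key N (le_refl N)
  rw [if_neg (by omega : ¬ C N = τ)] at hfin
  have : G N = ∑ j ∈ Finset.range N, (min (C j) (φ j) : ℚ)
      - a * ∑ j ∈ Finset.range N, (C j : ℚ)
      - ∑ j ∈ Finset.range N, (C j : ℚ) * ((τ:ℚ) - C (j+1)) := by
    rw [hG, Finset.mul_sum]
    rw [← Finset.sum_sub_distrib, ← Finset.sum_sub_distrib]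
  rw [this] at hfin
  linarith


lemma cycle_const {σ : ℕ} [NeZero σ] (c : ZMod σ → ℕ)
    (hmono : ∀ ω : ZMod σ, c (ω + 1) ≤ c ω) : ∀ x y : ZMod σ, c x = c y := by
  have step : ∀ (x : ZMod σ) (n : ℕ), c (x + n) ≤ c x := by
    intro x n
    induction n with
    | zero => simp
    | succ n ih =>
      have : ((n+1 : ℕ) : ZMod σ) = (n : ZMod σ) + 1 := by push_cast; ring
      rw [this, ← add_assoc]
      exact le_trans (hmono _) ih
  have loop : ∀ (x : ZMod σ) (n : ℕ), n ≤ σ → c x ≤ c (x + n) := by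
    intro x n hn
    have h1 : c (x + (n : ZMod σ) + ((σ - n : ℕ) : ZMod σ)) ≤ c (x + n) := by
      have := step (x + (n : ZMod σ)) (σ - n)
      exact this
    have h2 : x + (n : ZMod σ) + ((σ - n : ℕ) : ZMod σ) = x := by
      have : ((n : ℕ) : ZMod σ) + ((σ - n : ℕ) : ZMod σ) = ((σ : ℕ) : ZMod σ) := by
        rw [← Nat.cast_add]
        congr 1
        omega
      rw [add_assoc, this, ZMod.natCast_self, add_zero]
    rw [h2] at h1
    exact h1
  intro x y
  have hyx : y = x + ((y - x).val : ZMod σ) := by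
    rw [ZMod.natCast_val, ZMod.cast_id]
    ring
  have hle : (y - x).val ≤ σ := le_of_lt (ZMod.val_lt _)
  have := loop x ((y-x).val) hle
  have := step x ((y-x).val)
  rw [hyx]
  omega

lemma sum_rotate {σ : ℕ} [NeZero σ] {M : Type*} [AddCommMonoid M] (z : ZMod σ) (f : ZMod σ → M) :
    ∑ ω : ZMod σ, f ω = ∑ j ∈ Finset.range σ, f (z + (j : ℕ)) := by
  refine Finset.sum_nbij' (i := fun ω => (ω - z).val) (j := fun j => z + (j : ℕ)) ?_ ?_ ?_ ?_ ?_
  · intro ω _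
    exact Finset.mem_range.2 ((ω - z).val_lt)
  · intro j _
    exact mem_univ _
  · intro ω _
    simp [ZMod.natCast_val, ZMod.cast_id]
  · intro j hj
    rw [add_sub_cancel_left]
    exact ZMod.val_natCast_of_lt (Finset.mem_range.1 hj)
  · intro ω _
    congr 1
    simp [ZMod.natCast_val, ZMod.cast_id]

lemma claimA (σ τ : ℕ) [NeZero σ] (hσ : 3 ≤ σ) (hτ : 1 ≤ τ) (c : ZMod σ → ℕ)
    (hle : ∀ ω, c ω ≤ τ) (hpos : ∃ ω, 1 ≤ c ω) (hlt : ∃ ω, c ω < τ) :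
    (∑ ω : ZMod σ, c ω * c (ω + 1)) + τ ≤ τ * ∑ ω : ZMod σ, c ω := by
  have hshift : ∑ ω : ZMod σ, c (ω + 1) = ∑ ω : ZMod σ, c ω :=
    Fintype.sum_equiv (Equiv.addRight (1 : ZMod σ)) _ _ (fun ω => rfl)
  by_cases hne : ∃ ω₀ : ZMod σ, c ω₀ < c (ω₀ + 1)
  · obtain ⟨ω₀, hω₀⟩ := hne
    have hmem : ω₀ ∈ (univ : Finset (ZMod σ)) := mem_univ _
    have hsplit : ∀ f : ZMod σ → ℕ, ∑ ω : ZMod σ, f ω = f ω₀ + ∑ ω ∈ univ.erase ω₀, f ω :=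
      fun f => (Finset.add_sum_erase univ f hmem).symm
    rw [hsplit (fun ω => c ω * c (ω + 1))]
    have h1 : ∑ ω ∈ univ.erase ω₀, c ω * c (ω + 1) ≤ ∑ ω ∈ univ.erase ω₀, τ * c (ω + 1) :=
      Finset.sum_le_sum (fun ω _ => Nat.mul_le_mul_right _ (hle ω))
    have h2 : c ω₀ * c (ω₀ + 1) + τ ≤ τ * c (ω₀ + 1) := by
      have ha : c ω₀ + 1 ≤ c (ω₀ + 1) := hω₀
      have hb : c (ω₀ + 1) ≤ τ := hle _
      nlinarith [ha, hb]
    have h3 : τ * c (ω₀ + 1) + ∑ ω ∈ univ.erase ω₀, τ * c (ω + 1) = τ * ∑ ω : ZMod σ, c ω := by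
      rw [← hshift, ← Finset.mul_sum, hsplit (fun ω => c (ω + 1)), mul_add]
    omega
  · push_neg at hne
    have hconst := cycle_const c hne
    set k := c 0 with hk
    have hck : ∀ ω : ZMod σ, c ω = k := fun ω => hconst ω 0
    obtain ⟨ω1, hω1⟩ := hpos
    obtain ⟨ω2, hω2⟩ := hlt
    have hk1 : 1 ≤ k := by rw [hck ω1] at hω1; exact hω1
    have hkτ : k < τ := by rw [hck ω2] at hω2; exact hω2
    have hcard : (univ : Finset (ZMod σ)).card = σ := by
      simp [ZMod.card]
    have e1 : ∑ ω : ZMod σ, c ω * c (ω + 1) = σ * (k * k) := by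
      rw [Finset.sum_congr rfl (fun ω _ => by rw [hck ω, hck (ω+1)])]
      rw [Finset.sum_const, hcard, smul_eq_mul]
    have e2 : ∑ ω : ZMod σ, c ω = σ * k := by
      rw [Finset.sum_congr rfl (fun ω _ => hck ω), Finset.sum_const, hcard, smul_eq_mul]
    rw [e1, e2]
    zify
    have h1 : (1:ℤ) ≤ (k:ℤ) := by exact_mod_cast hk1
    have h2 : (k:ℤ) + 1 ≤ (τ:ℤ) := by exact_mod_cast hkτ
    have h3 : (3:ℤ) ≤ (σ:ℤ) := by exact_mod_cast hσ
    have hA : ((k:ℤ)-1)*((τ:ℤ)-(k:ℤ)-1) ≥ 0 := mul_nonneg (by linarith) (by linarith)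
    have hB : ((σ:ℤ)-3)*((k:ℤ)*((τ:ℤ)-(k:ℤ))) ≥ 0 :=
      mul_nonneg (by linarith) (mul_nonneg (by linarith) (by linarith))
    nlinarith [hA, hB, h1, h2, h3]




/-- Vertex set of the blow-up graph with fasteners: the `στ` cycle nodes plus
the two distinguished nodes `v₁ = Sum.inr 0` and `v₂ = Sum.inr 1`. -/
abbrev FVert (σ τ : ℕ) := (ZMod σ × Fin τ) ⊕ Fin 2

/-- Adjacency of the blow-up graph with fasteners. -/
def fadj {σ τ : ℕ} [NeZero σ] (F1 F2 : Finset (ZMod σ × Fin τ)) :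
    FVert σ τ → FVert σ τ → Bool
  | Sum.inl v, Sum.inl w => decide (w.1 = v.1 + 1 ∨ v.1 = w.1 + 1)
  | Sum.inl v, Sum.inr k => (decide (k = 0) && decide (v ∈ F1)) || (decide (k = 1) && decide (v ∈ F2))
  | Sum.inr k, Sum.inl v => (decide (k = 0) && decide (v ∈ F1)) || (decide (k = 1) && decide (v ∈ F2))
  | Sum.inr _, Sum.inr _ => false

/-- The blow-up graph with fasteners `G_{σ,τ,a}`. -/
def fastenedBlowup {σ τ : ℕ} [NeZero σ] (F1 F2 : Finset (ZMod σ × Fin τ)) :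
    SimpleGraph (FVert σ τ) :=
  SimpleGraph.fromRel (fun v w => fadj F1 F2 v w = true)

instance {σ τ : ℕ} [NeZero σ] (F1 F2 : Finset (ZMod σ × Fin τ)) :
    DecidableRel (fastenedBlowup F1 F2).Adj := fun v w =>
  decidable_of_iff (v ≠ w ∧ (fadj F1 F2 v w = true ∨ fadj F1 F2 w v = true)) Iff.rfl

set_option maxHeartbeats 3000000 in
/-- Proposition 1: for any partition of the vertices of `G_{σ,τ,a}` into `I+1` (nonempty)
communities with `v₁, v₂` together, the number `|E^≠|` of cross-community edges (here the
count of ordered adjacent pairs with distinct communities, which is `2|E^≠|`) satisfies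
`|E^≠| ≥ I(τ + a)`. -/
theorem stmt_6 (τ σ : ℕ) [NeZero σ] (a : ℚ) (hτ : 1 ≤ τ)
    (ha0 : 0 < a) (ha1 : a < 1) (hσ3 : 3 ≤ σ) (hσa : 2 / a ≤ (σ : ℚ))
    (m : ℤ) (heven : a * σ * τ = 2 * (m : ℚ))
    (F1 F2 : Finset (ZMod σ × Fin τ)) (hdisj : Disjoint F1 F2)
    (hF1 : (F1.card : ℚ) = a * σ * τ / 2) (hF2 : (F2.card : ℚ) = a * σ * τ / 2)
    (hlayer : ∀ ω : Fin σ, (((F1 ∪ F2).filter (fun v => v.1 = (ω : ZMod σ))).card : ℤ)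
        = ⌊a * ((ω : ℚ) + 1) * τ⌋ - ⌊a * (ω : ℚ) * τ⌋)
    (I : ℕ) (hI1 : 1 ≤ I) (hIστ : I ≤ σ * τ)
    (c : FVert σ τ → Fin (I + 1)) (hsurj : Function.Surjective c)
    (hc : c (Sum.inr 0) = c (Sum.inr 1)) :
    2 * (I : ℚ) * (τ + a) ≤
      ((Finset.univ.filter (fun p : FVert σ τ × FVert σ τ =>
        (fastenedBlowup F1 F2).Adj p.1 p.2 ∧ c p.1 ≠ c p.2)).card : ℚ) := by
  classical
  haveI : Fact (1 < σ) := ⟨by omega⟩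
  set G := fastenedBlowup F1 F2 with hGdef
  set g : ZMod σ × Fin τ → Fin (I+1) := fun v => c (Sum.inl v) with hgdef
  set i₀ : Fin (I+1) := c (Sum.inr 0) with hi₀
  -- basic ZMod facts
  have two_ne : (2 : ZMod σ) ≠ 0 := by
    have h2 : ((2:ℕ) : ZMod σ) ≠ 0 := by
      rw [Ne, ZMod.natCast_eq_zero_iff]
      intro hdvd
      have := Nat.le_of_dvd (by norm_num) hdvd
      omega
    simpa using h2
  have one_ne : (1 : ZMod σ) ≠ 0 := by
    have h1 : ((1:ℕ) : ZMod σ) ≠ 0 := by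
      rw [Ne, ZMod.natCast_eq_zero_iff]
      intro hdvd
      have := Nat.le_of_dvd (by norm_num) hdvd
      omega
    simpa using h1
  have zne1 : ∀ z : ZMod σ, z ≠ z + 1 := by
    intro z h
    exact one_ne (by linear_combination -h)
  have zne2 : ∀ z : ZMod σ, z ≠ z + 1 + 1 := by
    intro z h
    exact two_ne (by linear_combination -h)
  -- adjacency constructors
  have adj_ll : ∀ v w : ZMod σ × Fin τ, w.1 = v.1 + 1 →
      G.Adj (Sum.inl v) (Sum.inl w) := by
    intro v w hw
    rw [hGdef, fastenedBlowup, SimpleGraph.fromRel_adj]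
    constructor
    · intro h
      rw [Sum.inl.injEq] at h
      exact zne1 v.1 (by rw [← h] at hw; exact hw.symm ▸ hw)
    · left
      simp only [fadj]
      exact decide_eq_true (Or.inl hw)
  have adj_lr1 : ∀ u : ZMod σ × Fin τ, u ∈ F1 → G.Adj (Sum.inl u) (Sum.inr 0) := by
    intro u hu
    rw [hGdef, fastenedBlowup, SimpleGraph.fromRel_adj]
    refine ⟨by simp, Or.inl ?_⟩
    simp [fadj, hu]
  have adj_lr2 : ∀ u : ZMod σ × Fin τ, u ∈ F2 → G.Adj (Sum.inl u) (Sum.inr 1) := by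
    intro u hu
    rw [hGdef, fastenedBlowup, SimpleGraph.fromRel_adj]
    refine ⟨by simp, Or.inl ?_⟩
    simp [fadj, hu]
  -- the key finsets
  set Kc : Finset (ZMod σ × Fin τ × Fin τ) :=
    univ.filter (fun x => g (x.1, x.2.1) ≠ g (x.1 + 1, x.2.2)) with hKc
  set Kf1 : Finset (ZMod σ × Fin τ) := F1.filter (fun u => g u ≠ c (Sum.inr 0)) with hKf1
  set Kf2 : Finset (ZMod σ × Fin τ) := F2.filter (fun u => g u ≠ c (Sum.inr 1)) with hKf2
  set P : Finset (FVert σ τ × FVert σ τ) :=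
    univ.filter (fun p => G.Adj p.1 p.2 ∧ c p.1 ≠ c p.2) with hP
  -- Step 2: injection lower bound
  have step2 : 2 * (Kc.card + Kf1.card + Kf2.card) ≤ P.card := by
    classical
    set T := (univ : Finset Bool) ×ˢ (Kc.disjSum (Kf1.disjSum Kf2)) with hT
    have hTcard : T.card = 2 * (Kc.card + Kf1.card + Kf2.card) := by
      rw [hT, Finset.card_product, Finset.card_disjSum, Finset.card_disjSum]
      simp
      ring
    rw [← hTcard]
    apply Finset.card_le_card_of_injOn (fun z =>
      match z with
      | (true, Sum.inl x) => (Sum.inl (x.1, x.2.1), Sum.inl (x.1+1, x.2.2))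
      | (false, Sum.inl x) => (Sum.inl (x.1+1, x.2.2), Sum.inl (x.1, x.2.1))
      | (true, Sum.inr (Sum.inl u)) => (Sum.inl u, Sum.inr 0)
      | (false, Sum.inr (Sum.inl u)) => (Sum.inr 0, Sum.inl u)
      | (true, Sum.inr (Sum.inr u)) => (Sum.inl u, Sum.inr 1)
      | (false, Sum.inr (Sum.inr u)) => (Sum.inr 1, Sum.inl u))
    · rintro ⟨b, z⟩ hz
      have hz2 : z ∈ Kc.disjSum (Kf1.disjSum Kf2) := by
        rw [hT, Finset.mem_coe, Finset.mem_product] at hz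
        exact hz.2
      rw [hP, Finset.mem_coe, Finset.mem_filter]
      refine ⟨Finset.mem_univ _, ?_⟩
      rcases z with x | (u | u)
      · rw [Finset.inl_mem_disjSum, hKc, Finset.mem_filter] at hz2
        have hne : c (Sum.inl (x.1, x.2.1)) ≠ c (Sum.inl (x.1+1, x.2.2)) := hz2.2
        cases b
        · exact ⟨(adj_ll _ _ rfl).symm, Ne.symm hne⟩
        · exact ⟨adj_ll _ _ rfl, hne⟩
      · rw [Finset.inr_mem_disjSum, Finset.inl_mem_disjSum, hKf1, Finset.mem_filter] at hz2
        cases b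
        · exact ⟨(adj_lr1 _ hz2.1).symm, Ne.symm hz2.2⟩
        · exact ⟨adj_lr1 _ hz2.1, hz2.2⟩
      · rw [Finset.inr_mem_disjSum, Finset.inr_mem_disjSum, hKf2, Finset.mem_filter] at hz2
        cases b
        · exact ⟨(adj_lr2 _ hz2.1).symm, Ne.symm hz2.2⟩
        · exact ⟨adj_lr2 _ hz2.1, hz2.2⟩
    · rintro ⟨b1, z1⟩ h1 ⟨b2, z2⟩ h2 heq
      rcases z1 with x1 | (u1 | u1) <;> rcases z2 with x2 | (u2 | u2) <;>
        cases b1 <;> cases b2 <;>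
        simp only [Prod.mk.injEq, Sum.inl.injEq, Sum.inr.injEq, Prod.ext_iff] at heq ⊢ <;>
        try tauto
      · exfalso
        have h1 := heq.1.1
        have h2 := heq.2.1
        rw [← h1] at h2
        exact zne2 x1.1 h2
      · exfalso
        have h1 := heq.2.1
        have h2 := heq.1.1
        rw [← h1] at h2
        exact zne2 x1.1 h2
  -- layer counts
  set cnt : Fin (I+1) → ZMod σ → ℕ :=
    fun i ω => (univ.filter (fun t : Fin τ => g (ω, t) = i)).card with hcnt
  set φc : ZMod σ → ℕ := fun ω => ((F1 ∪ F2).filter (fun v => v.1 = ω)).card with hφc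
  set n : Fin (I+1) → ℕ := fun i => ∑ ω : ZMod σ, cnt i ω with hn
  -- Step 3: Kc identity
  set SD : ℕ := ∑ i : Fin (I+1), ∑ ω : ZMod σ, cnt i ω * cnt i (ω + 1) with hSD
  have step3 : Kc.card + SD = σ * (τ * τ) := by
    classical
    set Ec : Finset (ZMod σ × Fin τ × Fin τ) :=
      univ.filter (fun x => g (x.1, x.2.1) = g (x.1 + 1, x.2.2)) with hEc
    have hsplit : Ec.card + Kc.card = σ * (τ * τ) := by
      have h := Finset.card_filter_add_card_filter_not
        (s := (univ : Finset (ZMod σ × Fin τ × Fin τ)))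
        (p := fun x => g (x.1, x.2.1) = g (x.1 + 1, x.2.2))
      rw [hEc, hKc]
      have hcard : (univ : Finset (ZMod σ × Fin τ × Fin τ)).card = σ * (τ * τ) := by
        simp [Finset.card_univ, ZMod.card]
      rw [← hcard]
      exact h
    have hEcSD : Ec.card = SD := by
      have hfib : Ec.card = ∑ ω : ZMod σ, (Ec.filter (fun x => x.1 = ω)).card :=
        Finset.card_eq_sum_card_fiberwise (fun x _ => mem_univ x.1)
      have hωcard : ∀ ω : ZMod σ, (Ec.filter (fun x => x.1 = ω)).card
          = (univ.filter (fun tt' : Fin τ × Fin τ =>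
              g (ω, tt'.1) = g (ω + 1, tt'.2))).card := by
        intro ω
        refine Finset.card_bij' (fun x _ => x.2) (fun tt' _ => (ω, tt')) ?_ ?_ ?_ ?_
        case _ =>
          intro x hx
          simp only [hEc, Finset.mem_filter, Finset.mem_univ, true_and] at hx ⊢
          obtain ⟨h1, h2⟩ := hx
          rw [← h2]
          exact h1
        case _ =>
          intro tt' htt'
          simp only [hEc, Finset.mem_filter, Finset.mem_univ, true_and] at htt' ⊢
          first
            | exact ⟨htt', rfl⟩
            | exact ⟨htt', trivial⟩
            | exact htt'
        case _ =>
          rintro ⟨x1, xt⟩ hx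
          simp only [hEc, Finset.mem_filter] at hx
          simp [hx.2]
        case _ =>
          intro tt' _
          rfl
      have hinner : ∀ ω : ZMod σ, (univ.filter (fun tt' : Fin τ × Fin τ =>
          g (ω, tt'.1) = g (ω + 1, tt'.2))).card
          = ∑ i : Fin (I+1), cnt i ω * cnt i (ω + 1) := by
        intro ω
        have hfib2 : (univ.filter (fun tt' : Fin τ × Fin τ =>
            g (ω, tt'.1) = g (ω + 1, tt'.2))).card
            = ∑ i : Fin (I+1), ((univ.filter (fun tt' : Fin τ × Fin τ =>
                g (ω, tt'.1) = g (ω + 1, tt'.2))).filter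
                  (fun tt' => g (ω, tt'.1) = i)).card :=
          Finset.card_eq_sum_card_fiberwise (fun tt' _ => mem_univ _)
        rw [hfib2]
        apply Finset.sum_congr rfl
        intro i _
        have hset : ((univ.filter (fun tt' : Fin τ × Fin τ =>
            g (ω, tt'.1) = g (ω + 1, tt'.2))).filter (fun tt' => g (ω, tt'.1) = i))
            = (univ.filter (fun t : Fin τ => g (ω, t) = i)) ×ˢ
              (univ.filter (fun t : Fin τ => g (ω + 1, t) = i)) := by
          ext tt'
          simp only [Finset.mem_filter, Finset.mem_product, Finset.mem_univ, true_and]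
          constructor
          · rintro ⟨h1, h2⟩
            exact ⟨h2, by rw [← h1]; exact h2⟩
          · rintro ⟨h1, h2⟩
            exact ⟨by rw [h1, h2], h1⟩
        rw [hset, Finset.card_product]
      rw [hfib, hSD, Finset.sum_comm]
      exact Finset.sum_congr rfl (fun ω _ => by rw [hωcard ω, hinner ω])
    omega
  -- Step 4: totals
  have cnt_le : ∀ i ω, cnt i ω ≤ τ := by
    intro i ω
    calc cnt i ω ≤ (univ : Finset (Fin τ)).card := card_filter_le _ _
    _ = τ := by simp
  have cnt_sum : ∀ ω : ZMod σ, ∑ i : Fin (I+1), cnt i ω = τ := by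
    intro ω
    have h := Finset.card_eq_sum_card_fiberwise
      (f := fun t : Fin τ => g (ω, t)) (s := univ) (t := univ) (fun t _ => mem_univ _)
    simp only [Finset.card_fin] at h
    exact h.symm
  have n_total : ∑ i : Fin (I+1), n i = σ * τ := by
    rw [hn]
    rw [Finset.sum_comm]
    rw [Finset.sum_congr rfl (fun ω _ => cnt_sum ω)]
    simp [Finset.card_univ, ZMod.card]
  -- Step 5: fastener bounds
  set fd : ℕ := (F1.card - Kf1.card) + (F2.card - Kf2.card) with hfd
  have step5 : fd ≤ ∑ ω : ZMod σ, min (cnt i₀ ω) (φc ω) := by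
    classical
    have h1 : F1.card - Kf1.card = (F1.filter (fun u => g u = i₀)).card := by
      have h := Finset.card_filter_add_card_filter_not (s := F1)
        (p := fun u => g u = c (Sum.inr 0))
      have he : (F1.filter (fun a => ¬ g a = c (Sum.inr 0))) = Kf1 := by
        rw [hKf1]
      rw [he] at h
      rw [hi₀]
      omega
    have h2 : F2.card - Kf2.card = (F2.filter (fun u => g u = i₀)).card := by
      have h := Finset.card_filter_add_card_filter_not (s := F2)
        (p := fun u => g u = c (Sum.inr 1))
      have he : (F2.filter (fun a => ¬ g a = c (Sum.inr 1))) = Kf2 := by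
        rw [hKf2]
      rw [he] at h
      rw [hc]
      omega
    have h3 : fd = ((F1 ∪ F2).filter (fun u => g u = i₀)).card := by
      rw [hfd, h1, h2, Finset.filter_union]
      rw [Finset.card_union_of_disjoint
        (Finset.disjoint_filter_filter hdisj)]
    rw [h3]
    have h4 : ((F1 ∪ F2).filter (fun u => g u = i₀)).card
        = ∑ ω : ZMod σ, (((F1 ∪ F2).filter (fun u => g u = i₀)).filter
            (fun u => u.1 = ω)).card :=
      Finset.card_eq_sum_card_fiberwise (fun u _ => mem_univ u.1)
    rw [h4]
    apply Finset.sum_le_sum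
    intro ω _
    apply le_min
    · apply Finset.card_le_card_of_injOn (fun u => u.2)
      · rintro ⟨u1, ut⟩ hu
        simp only [Finset.mem_coe, Finset.mem_filter] at hu ⊢
        obtain ⟨⟨-, hg⟩, hω⟩ := hu
        simp only [Finset.mem_univ, true_and]
        rw [show u1 = ω from hω] at hg
        exact hg
      · rintro ⟨u1, ut⟩ hu ⟨w1, wt⟩ hw huw
        simp only [Finset.coe_filter, Set.mem_setOf_eq] at hu hw
        simp only at huw
        simp only [Prod.mk.injEq]
        exact ⟨by rw [hu.2, hw.2], huw⟩
    · apply Finset.card_le_card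
      intro u hu
      simp only [Finset.mem_filter] at hu ⊢
      exact ⟨hu.1.1, hu.2⟩
  have hKf1le : Kf1.card ≤ F1.card := card_filter_le _ _
  have hKf2le : Kf2.card ≤ F2.card := card_filter_le _ _
  -- fastener totals
  have hFtot : (F1.card : ℚ) + F2.card = a * σ * τ := by
    rw [hF1, hF2]; ring
  have haσ : 2 ≤ a * σ := by
    rw [div_le_iff₀ ha0] at hσa
    linarith [hσa]
  -- Step 6: the main combinatorial inequality
  have hτQ : (1:ℚ) ≤ (τ:ℚ) := by exact_mod_cast hτ
  have main : (I : ℚ) * ((τ : ℚ) + a) ≤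
      ((σ : ℚ) * (τ * τ) - (SD : ℚ)) + (a * σ * τ - (fd : ℚ)) := by
    classical
    -- each non-i₀ part has a cycle vertex
    have npos : ∀ i : Fin (I+1), i ≠ i₀ → 1 ≤ n i := by
      intro i hi
      obtain ⟨x, hx⟩ := hsurj i
      rcases x with v | k
      · have hv : v.2 ∈ univ.filter (fun t : Fin τ => g (v.1, t) = i) := by
          simp only [Finset.mem_filter, Finset.mem_univ, true_and]
          show c (Sum.inl (v.1, v.2)) = i
          rw [← hx]
        have h1 : 1 ≤ cnt i v.1 := Finset.card_pos.2 ⟨v.2, hv⟩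
        have h2 : cnt i v.1 ≤ n i := by
          rw [hn]
          exact Finset.single_le_sum (f := fun ω => cnt i ω)
            (fun _ _ => Nat.zero_le _) (mem_univ v.1)
        omega
      · exfalso
        apply hi
        fin_cases k
        · rw [← hx, hi₀]
          rfl
        · rw [← hx, hc]
          rfl
    -- n i ≤ στ
    have nle : ∀ i : Fin (I+1), n i ≤ σ * τ := by
      intro i
      have h := n_total
      calc n i ≤ ∑ j : Fin (I+1), n j :=
        Finset.single_le_sum (fun _ _ => Nat.zero_le _) (mem_univ i)
      _ = σ * τ := h
    by_cases hfull : ∃ i : Fin (I+1), i ≠ i₀ ∧ n i = σ * τ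
    · -- degenerate case: one part is the whole cycle
      obtain ⟨i, hi, hni⟩ := hfull
      have hcnti : ∀ ω, cnt i ω = τ := by
        intro ω
        by_contra hne
        have hlt : cnt i ω < τ := lt_of_le_of_ne (cnt_le i ω) hne
        have hstrict : n i < σ * τ := by
          rw [hn]
          calc ∑ ω' : ZMod σ, cnt i ω' < ∑ _ω' : ZMod σ, τ :=
            Finset.sum_lt_sum (fun ω' _ => cnt_le i ω') ⟨ω, mem_univ ω, hlt⟩
          _ = σ * τ := by simp [Finset.card_univ, ZMod.card]
        omega
      have hcnt0 : ∀ j, j ≠ i → ∀ ω, cnt j ω = 0 := by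
        intro j hj ω
        have h := cnt_sum ω
        have hsplit := (Finset.add_sum_erase univ (fun j' => cnt j' ω) (mem_univ i)).symm
        have hz : ∑ j' ∈ univ.erase i, cnt j' ω = 0 := by
          have := hcnti ω
          omega
        exact (Finset.sum_eq_zero_iff.1 hz) j (Finset.mem_erase.2 ⟨hj, mem_univ j⟩)
      have hIeq : I = 1 := by
        by_contra hI2
        have hI2' : 2 ≤ I := by omega
        have hsub : (univ : Finset (Fin (I+1))) ⊆ {i, i₀} := by
          intro j _
          by_contra hj
          simp only [Finset.mem_insert, Finset.mem_singleton] at hj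
          push_neg at hj
          have h0 : n j = 0 := by
            rw [hn]
            exact Finset.sum_eq_zero (fun ω _ => hcnt0 j hj.1 ω)
          have := npos j hj.2
          omega
        have hcard := Finset.card_le_card hsub
        have h2 : ({i, i₀} : Finset (Fin (I+1))).card ≤ 2 := by
          apply le_trans (Finset.card_insert_le _ _)
          simp
        rw [Finset.card_univ, Fintype.card_fin] at hcard
        omega
      have hSDval : SD = σ * (τ * τ) := by
        rw [hSD]
        rw [Finset.sum_eq_single i]
        · rw [Finset.sum_congr rfl (fun ω _ => by rw [hcnti ω, hcnti (ω+1)])]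
          simp [Finset.card_univ, ZMod.card]
        · intro j _ hj
          exact Finset.sum_eq_zero (fun ω _ => by rw [hcnt0 j hj ω]; ring)
        · intro h
          exact absurd (mem_univ i) h
      have hfd0 : fd = 0 := by
        have h := step5
        have hz : ∀ ω : ZMod σ, min (cnt i₀ ω) (φc ω) = 0 := by
          intro ω
          rw [hcnt0 i₀ (Ne.symm hi) ω]
          simp
        rw [Finset.sum_congr rfl (fun ω _ => hz ω)] at h
        simpa using h
      have hIQ : (I : ℚ) = 1 := by rw [hIeq]; norm_num
      have hSDQ : (SD : ℚ) = (σ:ℚ) * (τ * τ) := by rw [hSDval]; push_cast; ring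
      have hfdQ : (fd : ℚ) = 0 := by rw [hfd0]; norm_num
      rw [hIQ, hSDQ, hfdQ]
      have h2τ : 2 * (τ:ℚ) ≤ a * σ * τ := by
        have := mul_le_mul_of_nonneg_right haσ (by positivity : (0:ℚ) ≤ (τ:ℚ))
        linarith
      linarith [ha1, hτQ]
    · -- main case
      push_neg at hfull
      have hi₀lt : ∃ ω, cnt i₀ ω < τ := by
        by_contra hcon
        push_neg at hcon
        have hn₀ : n i₀ = σ * τ := by
          show (∑ ω : ZMod σ, cnt i₀ ω) = σ * τ
          rw [Finset.sum_congr rfl (fun ω _ => le_antisymm (cnt_le i₀ ω) (hcon ω))]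
          simp [Finset.card_univ, ZMod.card]
        have hnt : Nontrivial (Fin (I+1)) := by
          apply Fin.nontrivial_iff_two_le.2
          omega
        obtain ⟨j, hj⟩ := exists_ne i₀
        have h1 := npos j hj
        have hsum2 : n j + n i₀ ≤ ∑ i : Fin (I+1), n i := by
          have := Finset.add_sum_erase univ n (mem_univ j)
          have h3 : n i₀ ≤ ∑ i ∈ univ.erase j, n i :=
            Finset.single_le_sum (fun _ _ => Nat.zero_le _)
              (Finset.mem_erase.2 ⟨Ne.symm hj, mem_univ _⟩)
          omega
        rw [n_total] at hsum2
        omega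
      -- Claim A for all small parts
      have hA : ∀ i : Fin (I+1), i ≠ i₀ →
          (∑ ω : ZMod σ, cnt i ω * cnt i (ω+1)) + τ ≤ τ * n i := by
        intro i hi
        have h1 : ∃ ω, 1 ≤ cnt i ω := by
          by_contra hcon
          push_neg at hcon
          have : n i = 0 := by
            rw [hn]
            exact Finset.sum_eq_zero (fun ω _ => by have := hcon ω; omega)
          have := npos i hi
          omega
        have h2 : ∃ ω, cnt i ω < τ := by
          by_contra hcon
          push_neg at hcon
          have : n i = σ * τ := by
            show (∑ ω : ZMod σ, cnt i ω) = σ * τ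
            rw [Finset.sum_congr rfl (fun ω _ => le_antisymm (cnt_le i ω) (hcon ω))]
            simp [Finset.card_univ, ZMod.card]
          exact (hfull i hi) this
        have := claimA σ τ hσ3 hτ (cnt i) (cnt_le i) h1 h2
        rw [hn]
        exact this
      -- Claim C for the i₀ part
      have φfloor : ∀ x : ℕ, ((φc ((x : ℕ) : ZMod σ)) : ℤ)
          = ⌊a * ((x:ℚ) + 1) * τ⌋ - ⌊a * (x:ℚ) * τ⌋ := by
        intro x
        have hσpos : 0 < σ := NeZero.pos σ
        set r := x % σ with hr
        set q := x / σ with hq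
        have hxq : (x : ℚ) = (r : ℚ) + σ * q := by
          have h := Nat.mod_add_div x σ
          have h2 : ((r + σ * q : ℕ) : ℚ) = (x:ℚ) := by
            rw [hr, hq]
            exact_mod_cast congrArg (Nat.cast (R := ℚ)) h
          push_cast at h2
          linarith
        have hcast : ((r : ℕ) : ZMod σ) = ((x : ℕ) : ZMod σ) := by
          rw [hr, ZMod.natCast_mod]
        have hlay := hlayer ⟨r, Nat.mod_lt x hσpos⟩
        have key : ∀ y : ℚ, ⌊y + a * σ * τ * q⌋ = ⌊y⌋ + 2 * m * q := by
          intro y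
          rw [heven]
          rw [show (2:ℚ) * (m:ℚ) * (q:ℚ) = ((2 * m * q : ℤ) : ℚ) from by push_cast; ring]
          rw [Int.floor_add_intCast y _]
        have e1 : a * (x:ℚ) * τ = a * (r:ℚ) * τ + a * σ * τ * q := by rw [hxq]; ring
        have e2 : a * ((x:ℚ)+1) * τ = a * ((r:ℚ)+1) * τ + a * σ * τ * q := by rw [hxq]; ring
        rw [e1, e2, key, key, ← hcast]
        have hlay' : ((φc ((r : ℕ) : ZMod σ)) : ℤ)
            = ⌊a * ((r:ℚ) + 1) * τ⌋ - ⌊a * (r:ℚ) * τ⌋ := hlay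
        omega
      have hCmain : (∑ ω : ZMod σ, ((cnt i₀ ω : ℚ) * cnt i₀ (ω+1)))
          + (∑ ω : ZMod σ, (min (cnt i₀ ω) (φc ω) : ℚ))
          ≤ ((τ:ℚ) + a) * (n i₀ : ℚ) := by
        obtain ⟨ω₀, hω₀⟩ := hi₀lt
        set ν : ℕ := ω₀.val with hν
        have hνω : ((ν : ℕ) : ZMod σ) = ω₀ := ZMod.natCast_rightInverse ω₀
        set Cf : ℕ → ℕ := fun j => cnt i₀ (ω₀ + (j : ℕ)) with hCf
        set φf : ℕ → ℕ := fun j => φc (ω₀ + (j : ℕ)) with hφf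
        set ρf : ℕ → ℚ := fun j => Int.fract (a * ((ν + j : ℕ) : ℚ) * τ) with hρf
        have hadd : ∀ j : ℕ, ω₀ + ((j : ℕ) : ZMod σ) = (((ν + j : ℕ)) : ZMod σ) := by
          intro j
          push_cast
          rw [hνω]
        have hφval : ∀ j : ℕ, ((φf j : ℕ) : ℚ) = a * τ + ρf j - ρf (j+1) := by
          intro j
          have h1 := φfloor (ν + j)
          have h2 : ((φf j : ℕ) : ℤ) = ⌊a * (((ν+j:ℕ):ℚ) + 1) * τ⌋ - ⌊a * ((ν+j:ℕ):ℚ) * τ⌋ := by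
            rw [hφf]
            simp only
            rw [hadd j]
            exact h1
          have h3 : ((φf j : ℕ) : ℚ)
              = (⌊a * (((ν+j:ℕ):ℚ) + 1) * τ⌋ : ℚ) - (⌊a * ((ν+j:ℕ):ℚ) * τ⌋ : ℚ) := by
            exact_mod_cast congrArg (fun z : ℤ => (z : ℚ)) h2
          show ((φf j : ℕ) : ℚ) = a * τ + Int.fract (a * ((ν+j:ℕ):ℚ) * τ)
            - Int.fract (a * ((ν+(j+1):ℕ):ℚ) * τ)
          have hc1 : ((ν + (j+1) : ℕ) : ℚ) = ((ν+j:ℕ):ℚ) + 1 := by push_cast; ring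
          rw [hc1]
          have e1 := Int.floor_add_fract (a * ((ν + j : ℕ) : ℚ) * τ)
          have e2 := Int.floor_add_fract (a * (((ν + j : ℕ) : ℚ) + 1) * τ)
          have hax : a * (((ν + j : ℕ):ℚ) + 1) * τ = a * ((ν+j:ℕ):ℚ) * τ + a * τ := by ring
          linarith [h3, e1, e2, hax]
        have hcc := claimCstar τ hτ a ha0 (le_of_lt ha1) σ Cf φf ρf
          (fun j _ => Int.fract_nonneg _) (fun j _ => Int.fract_lt_one _)
          (fun j _ => hφval j)
          (fun j _ => cnt_le i₀ _)
          (by show cnt i₀ (ω₀ + ((σ:ℕ):ZMod σ)) = cnt i₀ (ω₀ + ((0:ℕ):ZMod σ))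
              simp [ZMod.natCast_self])
          (by show cnt i₀ (ω₀ + ((0:ℕ):ZMod σ)) < τ
              simpa using hω₀)
        -- translate back
        have hrot1 : ∑ ω : ZMod σ, (min (cnt i₀ ω) (φc ω) : ℚ)
            = ∑ j ∈ Finset.range σ, (min (Cf j) (φf j) : ℚ) :=
          sum_rotate ω₀ (fun ω => (min (cnt i₀ ω) (φc ω) : ℚ))
        have hrot2 : ∑ ω : ZMod σ, (cnt i₀ ω : ℚ)
            = ∑ j ∈ Finset.range σ, (Cf j : ℚ) :=
          sum_rotate ω₀ (fun ω => (cnt i₀ ω : ℚ))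
        have hrot3 : ∑ ω : ZMod σ, ((cnt i₀ ω : ℚ) * cnt i₀ (ω+1))
            = ∑ j ∈ Finset.range σ, (Cf j : ℚ) * Cf (j+1) := by
          rw [sum_rotate ω₀ (fun ω => ((cnt i₀ ω : ℚ) * cnt i₀ (ω+1)))]
          apply Finset.sum_congr rfl
          intro j _
          have : ω₀ + ((j:ℕ) : ZMod σ) + 1 = ω₀ + (((j+1:ℕ)) : ZMod σ) := by
            push_cast
            ring
          rw [hCf]
          simp only
          rw [this]
        have hsub : ∑ j ∈ Finset.range σ, (Cf j : ℚ) * ((τ:ℚ) - Cf (j+1))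
            = (τ:ℚ) * (∑ j ∈ Finset.range σ, (Cf j : ℚ))
              - ∑ j ∈ Finset.range σ, (Cf j : ℚ) * Cf (j+1) := by
          rw [Finset.mul_sum, ← Finset.sum_sub_distrib]
          exact Finset.sum_congr rfl (fun j _ => by ring)
        have hnQ : (n i₀ : ℚ) = ∑ ω : ZMod σ, (cnt i₀ ω : ℚ) := by
          rw [hn]
          push_cast
          rfl
        rw [hrot1, hrot3, hnQ, hrot2]
        linarith [hcc, hsub]
      -- assemble the main case
      have hSDsplit : SD = (∑ ω : ZMod σ, cnt i₀ ω * cnt i₀ (ω+1))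
          + ∑ i ∈ univ.erase i₀, (∑ ω : ZMod σ, cnt i ω * cnt i (ω+1)) := by
        rw [hSD]
        exact (Finset.add_sum_erase univ _ (mem_univ i₀)).symm
      have hnsplit : n i₀ + ∑ i ∈ univ.erase i₀, n i = σ * τ := by
        rw [← n_total]
        exact Finset.add_sum_erase univ n (mem_univ i₀)
      have hcardI : (univ.erase i₀).card = I := by
        rw [Finset.card_erase_of_mem (mem_univ i₀), Finset.card_univ, Fintype.card_fin]
        omega
      have hIle : I ≤ ∑ i ∈ univ.erase i₀, n i := by
        calc I = (univ.erase i₀).card := hcardI.symm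
        _ = ∑ _i ∈ univ.erase i₀, 1 := by simp
        _ ≤ ∑ i ∈ univ.erase i₀, n i :=
          Finset.sum_le_sum (fun i hi => npos i (Finset.mem_erase.1 hi).1)
      have hAsum : (∑ i ∈ univ.erase i₀, (∑ ω : ZMod σ, cnt i ω * cnt i (ω+1))) + I * τ
          ≤ τ * ∑ i ∈ univ.erase i₀, n i := by
        calc (∑ i ∈ univ.erase i₀, (∑ ω : ZMod σ, cnt i ω * cnt i (ω+1))) + I * τ
            = ∑ i ∈ univ.erase i₀, ((∑ ω : ZMod σ, cnt i ω * cnt i (ω+1)) + τ) := by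
              rw [Finset.sum_add_distrib, Finset.sum_const, hcardI, smul_eq_mul]
          _ ≤ ∑ i ∈ univ.erase i₀, τ * n i :=
              Finset.sum_le_sum (fun i hi => hA i (Finset.mem_erase.1 hi).1)
          _ = τ * ∑ i ∈ univ.erase i₀, n i := by rw [Finset.mul_sum]
      -- cast everything to ℚ and finish
      have hD0Q : ((∑ ω : ZMod σ, cnt i₀ ω * cnt i₀ (ω+1) : ℕ) : ℚ)
          = ∑ ω : ZMod σ, ((cnt i₀ ω : ℚ) * cnt i₀ (ω+1)) := by push_cast; rfl
      have hfdQ : (fd : ℚ) ≤ ∑ ω : ZMod σ, (min (cnt i₀ ω) (φc ω) : ℚ) := by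
        have := step5
        calc (fd : ℚ) ≤ ((∑ ω : ZMod σ, min (cnt i₀ ω) (φc ω) : ℕ) : ℚ) := by
              exact_mod_cast this
        _ = ∑ ω : ZMod σ, (min (cnt i₀ ω) (φc ω) : ℚ) := by push_cast; rfl
      have hSDQ : (SD : ℚ) = ((∑ ω : ZMod σ, cnt i₀ ω * cnt i₀ (ω+1) : ℕ) : ℚ)
          + ((∑ i ∈ univ.erase i₀, (∑ ω : ZMod σ, cnt i ω * cnt i (ω+1)) : ℕ) : ℚ) := by
        rw [hSDsplit]
        push_cast
        ring
      have hAsumQ : ((∑ i ∈ univ.erase i₀, (∑ ω : ZMod σ, cnt i ω * cnt i (ω+1)) : ℕ) : ℚ)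
          + I * τ ≤ (τ:ℚ) * ((∑ i ∈ univ.erase i₀, n i : ℕ) : ℚ) := by
        exact_mod_cast hAsum
      have hnsplitQ : ((n i₀ : ℕ) : ℚ) + ((∑ i ∈ univ.erase i₀, n i : ℕ) : ℚ)
          = (σ:ℚ) * τ := by exact_mod_cast hnsplit
      have hIleQ : (I:ℚ) ≤ ((∑ i ∈ univ.erase i₀, n i : ℕ) : ℚ) := by exact_mod_cast hIle
      have haI : a * (I:ℚ) ≤ a * ((∑ i ∈ univ.erase i₀, n i : ℕ) : ℚ) :=
        mul_le_mul_of_nonneg_left hIleQ (le_of_lt ha0)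
      have hCQ : ((∑ ω : ZMod σ, cnt i₀ ω * cnt i₀ (ω+1) : ℕ) : ℚ) + (fd : ℚ)
          ≤ ((τ:ℚ) + a) * (n i₀ : ℚ) := by
        rw [hD0Q]
        linarith [hCmain, hfdQ]
      have hanQ : a * ((n i₀ : ℕ) : ℚ) + a * ((∑ i ∈ univ.erase i₀, n i : ℕ) : ℚ)
          = a * σ * τ := by
        rw [← mul_add, hnsplitQ]
        ring
      nlinarith [hSDQ, hAsumQ, hCQ, hanQ, haI, hnsplitQ]

  -- assemble
  have hKcQ : (Kc.card : ℚ) = (σ : ℚ) * (τ * τ) - (SD : ℚ) := by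
    have h := congrArg (Nat.cast (R := ℚ)) step3
    push_cast at h
    linarith
  have hKfQ : (Kf1.card : ℚ) + Kf2.card = a * σ * τ - (fd : ℚ) := by
    have h1 : fd = (F1.card + F2.card) - (Kf1.card + Kf2.card) := by
      rw [hfd]; omega
    have h2 : (fd : ℚ) = (F1.card : ℚ) + F2.card - (Kf1.card + Kf2.card) := by
      rw [h1, Nat.cast_sub (by omega)]
      push_cast
      ring
    rw [h2, hFtot]
    ring
  have hPQ : 2 * ((Kc.card : ℚ) + Kf1.card + Kf2.card) ≤ (P.card : ℚ) := by
    exact_mod_cast step2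
  rw [hP] at hPQ
  calc 2 * (I : ℚ) * ((τ : ℚ) + a) ≤ 2 * ((Kc.card : ℚ) + Kf1.card + Kf2.card) := by
        linarith [main, hKcQ, hKfQ]
    _ ≤ _ := hPQ
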